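/- arXiv:2001.06744 — 6 statements merged into one kernel-verified Lean document; each statement's English description precedes it below -/
import Mathlib

section
/- Let F : ℝⁿ → ℝ be a function whose gradient map ∇F is differentiable at a point η with derivative (Hessian) H : ℝⁿ → ℝⁿ an invertible linear map, let G : ℝⁿ → ℝⁿ be differentiable at η* := ∇F(η) and satisfy G(∇F(x)) = x for all x in a neighborhood of η, and let f : ℝⁿ → ℝ be differentiable at η. Then the gradient of the composite f ∘ G at η* equals H⁻¹ applied to the gradient of f at η. In other words, in a dually flat manifold the natural gradient of f in the primal parametrization η equals the ordinary gradient of f expressed in the dual parametrization η*: ∇̃f(η) = ∇f(η*). -/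
open Filter

local notation "Euc " n => EuclideanSpace ℝ (Fin n)

/-- In a dually flat manifold the natural gradient of `f` in the primal
parametrization equals the ordinary gradient of `f` in the dual parametrization:
if `gF` is the gradient map of a potential `F`, differentiable at `η` with
invertible derivative (Hessian) `H`, and `G` (the gradient of the dual
potential) inverts `gF` near `η` and is differentiable at `η* = gF η`, then
for `f` differentiable at `η` we have `∇(f ∘ G)(η*) = H⁻¹ (∇f(η))`. -/
theorem natural_gradient_eq_dual_gradient {n : ℕ}
    (F f : EuclideanSpace ℝ (Fin n) → ℝ) (η : EuclideanSpace ℝ (Fin n))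
    (gF : EuclideanSpace ℝ (Fin n) → EuclideanSpace ℝ (Fin n))
    (hgF : ∀ x, HasGradientAt F (gF x) x)
    (H : EuclideanSpace ℝ (Fin n) ≃L[ℝ] EuclideanSpace ℝ (Fin n))
    (hH : HasFDerivAt gF (H : EuclideanSpace ℝ (Fin n) →L[ℝ] EuclideanSpace ℝ (Fin n)) η)
    (G : EuclideanSpace ℝ (Fin n) → EuclideanSpace ℝ (Fin n))
    (hG : G (gF η) = η ∧ ∀ᶠ x in nhds η, G (gF x) = x)
    (hGdiff : DifferentiableAt ℝ G (gF η))
    (hf : DifferentiableAt ℝ f η) :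
    gradient (fun y => f (G y)) (gF η) = H.symm (gradient f η) := by
  have hF' : ∀ y, HasFDerivAt F (InnerProductSpace.toDual ℝ (Euc n) (gF y)) y :=
    fun y => (hgF y).hasFDerivAt
  have hF'' : HasFDerivAt (fun y => InnerProductSpace.toDual ℝ (Euc n) (gF y))
      (((InnerProductSpace.toDual ℝ (Euc n)).toContinuousLinearEquiv.toContinuousLinearMap).comp
        (H : (Euc n) →L[ℝ] (Euc n))) η :=
    ((InnerProductSpace.toDual ℝ (Euc n)).toContinuousLinearEquiv.toContinuousLinearMap.hasFDerivAt).comp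
      η hH
  have hsymm : ∀ v w : Euc n, inner ℝ (H v) w = (inner ℝ (H w) v : ℝ) := by
    intro v w
    have := second_derivative_symmetric hF' hF'' v w
    simpa [InnerProductSpace.toDual_apply_apply] using this
  -- The derivative of G at gF η is H.symm.
  have hcomp : HasFDerivAt (fun x => G (gF x))
      ((fderiv ℝ G (gF η)).comp (H : (Euc n) →L[ℝ] (Euc n))) η :=
    hGdiff.hasFDerivAt.comp η hH
  have hid : HasFDerivAt (fun x : Euc n => x)
      ((fderiv ℝ G (gF η)).comp (H : (Euc n) →L[ℝ] (Euc n))) η :=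
    hcomp.congr_of_eventuallyEq (hG.2.mono fun x hx => hx.symm)
  have hGH : (fderiv ℝ G (gF η)).comp (H : (Euc n) →L[ℝ] (Euc n)) =
      ContinuousLinearMap.id ℝ (Euc n) :=
    hid.unique (hasFDerivAt_id η)
  have hG' : fderiv ℝ G (gF η) = (H.symm : (Euc n) →L[ℝ] (Euc n)) := by
    refine ContinuousLinearMap.ext fun v => ?_
    have := congrArg (fun (T : (Euc n) →L[ℝ] (Euc n)) => T (H.symm v)) hGH
    simpa using this
  have hGder : HasFDerivAt G (H.symm : (Euc n) →L[ℝ] (Euc n)) (gF η) :=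
    hG' ▸ hGdiff.hasFDerivAt
  -- Derivative of the composite.
  have hfη : HasFDerivAt f (InnerProductSpace.toDual ℝ (Euc n) (gradient f η)) η :=
    hf.hasGradientAt.hasFDerivAt
  have hfη' : HasFDerivAt f (InnerProductSpace.toDual ℝ (Euc n) (gradient f η)) (G (gF η)) := by
    rw [hG.1]; exact hfη
  have hcomp2 : HasFDerivAt (fun y => f (G y))
      ((InnerProductSpace.toDual ℝ (Euc n) (gradient f η)).comp
        (H.symm : (Euc n) →L[ℝ] (Euc n))) (gF η) :=
    hfη'.comp (gF η) hGder
  have hkey : (InnerProductSpace.toDual ℝ (Euc n) (gradient f η)).comp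
      (H.symm : (Euc n) →L[ℝ] (Euc n)) =
      InnerProductSpace.toDual ℝ (Euc n) (H.symm (gradient f η)) := by
    refine ContinuousLinearMap.ext fun v => ?_
    simp only [ContinuousLinearMap.comp_apply, ContinuousLinearEquiv.coe_coe,
      InnerProductSpace.toDual_apply_apply]
    calc (inner ℝ (gradient f η) (H.symm v) : ℝ)
        = inner ℝ (H (H.symm (gradient f η))) (H.symm v) := by rw [H.apply_symm_apply]
      _ = inner ℝ (H (H.symm v)) (H.symm (gradient f η)) := hsymm _ _
      _ = inner ℝ v (H.symm (gradient f η)) := by rw [H.apply_symm_apply]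
      _ = inner ℝ (H.symm (gradient f η)) v := real_inner_comm _ _
  have hgrad : HasGradientAt (fun y => f (G y)) (H.symm (gradient f η)) (gF η) := by
    rw [hasGradientAt_iff_hasFDerivAt]
    exact hkey ▸ hcomp2
  exact hgrad.gradient
end

section
/- For a finite set X, a statistic T : X → ℝᵗ and θ ∈ ℝᵗ, the Fisher information matrix of the exponential family equals the Hessian of the log-partition function: for all indices i,j, Σ_{x∈X} (∂_i log P_θ(x)) (∂_j log P_θ(x)) P_θ(x) = ∂_i ∂_j F(θ), and both equal the covariance of T under P_θ, namely E_{P_θ}[T_i T_j] − E_{P_θ}[T_i] E_{P_θ}[T_j]. -/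
open scoped RealInnerProductSpace BigOperators

section aux
variable {X : Type*} [Fintype X] [Nonempty X] {t : ℕ}
  (T : X → EuclideanSpace ℝ (Fin t))

lemma lam_pos (θ' : EuclideanSpace ℝ (Fin t)) :
    0 < ∑ x : X, Real.exp ⟪T x, θ'⟫ :=
  Finset.sum_pos (fun _ _ => Real.exp_pos _) Finset.univ_nonempty

lemma hasFDerivAt_lam (θ' : EuclideanSpace ℝ (Fin t)) :
    HasFDerivAt (fun θ'' => ∑ x : X, Real.exp ⟪T x, θ''⟫)
      (∑ x : X, Real.exp ⟪T x, θ'⟫ • innerSL ℝ (T x)) θ' :=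
  HasFDerivAt.fun_sum fun x _ =>
    (Real.hasDerivAt_exp ⟪T x, θ'⟫).comp_hasFDerivAt θ' (innerSL ℝ (T x)).hasFDerivAt

lemma hasFDerivAt_F (θ' : EuclideanSpace ℝ (Fin t)) :
    HasFDerivAt (fun θ'' => Real.log (∑ x : X, Real.exp ⟪T x, θ''⟫))
      ((∑ x : X, Real.exp ⟪T x, θ'⟫)⁻¹ • (∑ x : X, Real.exp ⟪T x, θ'⟫ • innerSL ℝ (T x))) θ' :=
  (hasFDerivAt_lam T θ').log (lam_pos T θ').ne'

lemma fderiv_F_apply (θ' : EuclideanSpace ℝ (Fin t)) (k : Fin t) :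
    fderiv ℝ (fun θ'' => Real.log (∑ x : X, Real.exp ⟪T x, θ''⟫)) θ'
      (EuclideanSpace.single k 1)
      = (∑ x : X, T x k * Real.exp ⟪T x, θ'⟫) / (∑ x : X, Real.exp ⟪T x, θ'⟫) := by
  rw [(hasFDerivAt_F T θ').fderiv]
  simp only [ContinuousLinearMap.smul_apply, ContinuousLinearMap.sum_apply,
    innerSL_apply_apply, EuclideanSpace.inner_single_right, smul_eq_mul]
  rw [div_eq_inv_mul, Finset.mul_sum, Finset.mul_sum]
  exact Finset.sum_congr rfl fun x _ => by
    rw [starRingEnd_apply, star_trivial]; ring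
end aux

section aux2
variable {X : Type*} [Fintype X] [Nonempty X] {t : ℕ}
  (T : X → EuclideanSpace ℝ (Fin t))

lemma expL_apply (θ' : EuclideanSpace ℝ (Fin t)) (k : Fin t) :
    (∑ x : X, Real.exp ⟪T x, θ'⟫ • innerSL ℝ (T x)) (EuclideanSpace.single k 1)
      = ∑ x : X, T x k * Real.exp ⟪T x, θ'⟫ := by
  simp only [ContinuousLinearMap.sum_apply, ContinuousLinearMap.smul_apply,
    innerSL_apply_apply, EuclideanSpace.inner_single_right, smul_eq_mul]
  exact Finset.sum_congr rfl fun x _ => by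
    rw [starRingEnd_apply, star_trivial]; ring

lemma expN_apply (θ' : EuclideanSpace ℝ (Fin t)) (j k : Fin t) :
    (∑ x : X, T x j • (Real.exp ⟪T x, θ'⟫ • innerSL ℝ (T x))) (EuclideanSpace.single k 1)
      = ∑ x : X, T x k * T x j * Real.exp ⟪T x, θ'⟫ := by
  simp only [ContinuousLinearMap.sum_apply, ContinuousLinearMap.smul_apply,
    innerSL_apply_apply, EuclideanSpace.inner_single_right, smul_eq_mul]
  exact Finset.sum_congr rfl fun x _ => by
    rw [starRingEnd_apply, star_trivial]; ring

lemma hasFDerivAt_N (θ' : EuclideanSpace ℝ (Fin t)) (j : Fin t) :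
    HasFDerivAt (fun θ'' => ∑ x : X, T x j * Real.exp ⟪T x, θ''⟫)
      (∑ x : X, T x j • (Real.exp ⟪T x, θ'⟫ • innerSL ℝ (T x))) θ' :=
  HasFDerivAt.fun_sum fun x _ =>
    ((Real.hasDerivAt_exp ⟪T x, θ'⟫).comp_hasFDerivAt θ'
      (innerSL ℝ (T x)).hasFDerivAt).const_mul (T x j)

lemma second_deriv_F (θ' : EuclideanSpace ℝ (Fin t)) (i j : Fin t) :
    fderiv ℝ (fun θ'' => fderiv ℝ (fun θ''' => Real.log (∑ x : X, Real.exp ⟪T x, θ'''⟫)) θ''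
        (EuclideanSpace.single j 1)) θ' (EuclideanSpace.single i 1)
      = (∑ x : X, T x i * T x j * Real.exp ⟪T x, θ'⟫) / (∑ x : X, Real.exp ⟪T x, θ'⟫)
        - (∑ x : X, T x j * Real.exp ⟪T x, θ'⟫)
          * ((∑ x : X, Real.exp ⟪T x, θ'⟫) ^ 2)⁻¹ * (∑ x : X, T x i * Real.exp ⟪T x, θ'⟫) := by
  have hl := lam_pos T θ'
  have hfun : (fun θ'' => fderiv ℝ (fun θ''' => Real.log (∑ x : X, Real.exp ⟪T x, θ'''⟫)) θ''
        (EuclideanSpace.single j 1))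
      = fun θ'' => (∑ x : X, T x j * Real.exp ⟪T x, θ''⟫) / (∑ x : X, Real.exp ⟪T x, θ''⟫) :=
    funext fun θ'' => fderiv_F_apply T θ'' j
  have hinv : HasFDerivAt (fun θ'' => (∑ x : X, Real.exp ⟪T x, θ''⟫)⁻¹)
      ((-((∑ x : X, Real.exp ⟪T x, θ'⟫) ^ 2)⁻¹) • (∑ x : X, Real.exp ⟪T x, θ'⟫ • innerSL ℝ (T x))) θ' :=
    (hasDerivAt_inv hl.ne').comp_hasFDerivAt θ' (hasFDerivAt_lam T θ')
  have hG : HasFDerivAt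
      (fun θ'' => (∑ x : X, T x j * Real.exp ⟪T x, θ''⟫) / (∑ x : X, Real.exp ⟪T x, θ''⟫))
      ((∑ x : X, T x j * Real.exp ⟪T x, θ'⟫) •
          ((-((∑ x : X, Real.exp ⟪T x, θ'⟫) ^ 2)⁻¹) • (∑ x : X, Real.exp ⟪T x, θ'⟫ • innerSL ℝ (T x)))
        + (∑ x : X, Real.exp ⟪T x, θ'⟫)⁻¹ • (∑ x : X, T x j • (Real.exp ⟪T x, θ'⟫ • innerSL ℝ (T x)))) θ' := by
    have := (hasFDerivAt_N T θ' j).mul hinv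
    simpa only [div_eq_mul_inv, Pi.mul_def] using this
  rw [hfun, hG.fderiv]
  simp only [ContinuousLinearMap.add_apply, ContinuousLinearMap.smul_apply, smul_eq_mul,
    expL_apply, expN_apply]
  field_simp
  ring

end aux2

section aux3
variable {X : Type*} [Fintype X] [Nonempty X] {t : ℕ}
  (T : X → EuclideanSpace ℝ (Fin t))

lemma fderiv_logP (θ' : EuclideanSpace ℝ (Fin t)) (x : X) (k : Fin t) :
    fderiv ℝ (fun θ'' => Real.log (Real.exp ⟪T x, θ''⟫ / ∑ x' : X, Real.exp ⟪T x', θ''⟫)) θ'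
        (EuclideanSpace.single k 1)
      = T x k - (∑ x' : X, T x' k * Real.exp ⟪T x', θ'⟫) / (∑ x' : X, Real.exp ⟪T x', θ'⟫) := by
  have hfun : (fun θ'' => Real.log (Real.exp ⟪T x, θ''⟫ / ∑ x' : X, Real.exp ⟪T x', θ''⟫))
      = fun θ'' : EuclideanSpace ℝ (Fin t) =>
          ⟪T x, θ''⟫ - Real.log (∑ x' : X, Real.exp ⟪T x', θ''⟫) :=
    funext fun θ'' => by
      rw [Real.log_div (Real.exp_ne_zero _) (lam_pos T θ'').ne', Real.log_exp]
  rw [hfun]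
  have h : HasFDerivAt
      (fun θ'' : EuclideanSpace ℝ (Fin t) =>
        ⟪T x, θ''⟫ - Real.log (∑ x' : X, Real.exp ⟪T x', θ''⟫))
      (innerSL ℝ (T x) - (∑ x' : X, Real.exp ⟪T x', θ'⟫)⁻¹ •
        (∑ x' : X, Real.exp ⟪T x', θ'⟫ • innerSL ℝ (T x'))) θ' :=
    (innerSL ℝ (T x)).hasFDerivAt.sub (hasFDerivAt_F T θ')
  rw [h.fderiv]
  simp only [ContinuousLinearMap.coe_sub', Pi.sub_apply, innerSL_apply_apply,
    ContinuousLinearMap.smul_apply, smul_eq_mul, expL_apply,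
    EuclideanSpace.inner_single_right, starRingEnd_apply, star_trivial, one_mul,
    div_eq_inv_mul]
end aux3


/-- Fisher information of a finite linear exponential family equals the Hessian
of the log-partition function `F(θ) = log Σ_x exp⟨T x, θ⟩`, and both equal the
covariance of the statistic:
`Σ_x ∂ᵢ(log P_θ(x)) ∂ⱼ(log P_θ(x)) P_θ(x) = ∂ᵢ∂ⱼF(θ) = E[TᵢTⱼ] − E[Tᵢ]E[Tⱼ]`. -/
theorem fisher_information_eq_hessian_log_partition {X : Type*} [Fintype X] [Nonempty X]
    {t : ℕ} (T : X → EuclideanSpace ℝ (Fin t)) (θ : EuclideanSpace ℝ (Fin t))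
    (i j : Fin t) :
    -- the exponential family density and log-partition function
    (fun (P : EuclideanSpace ℝ (Fin t) → X → ℝ)
         (F : EuclideanSpace ℝ (Fin t) → ℝ) =>
      (∑ x : X, (fderiv ℝ (fun θ' => Real.log (P θ' x)) θ (EuclideanSpace.single i 1))
          * (fderiv ℝ (fun θ' => Real.log (P θ' x)) θ (EuclideanSpace.single j 1))
          * P θ x)
        = fderiv ℝ (fun θ' => fderiv ℝ F θ' (EuclideanSpace.single j 1)) θ
            (EuclideanSpace.single i 1) ∧
      fderiv ℝ (fun θ' => fderiv ℝ F θ' (EuclideanSpace.single j 1)) θ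
            (EuclideanSpace.single i 1)
        = (∑ x : X, T x i * T x j * P θ x)
            - (∑ x : X, T x i * P θ x) * (∑ x : X, T x j * P θ x))
      (fun θ' x => Real.exp ⟪T x, θ'⟫ / ∑ x' : X, Real.exp ⟪T x', θ'⟫)
      (fun θ' => Real.log (∑ x : X, Real.exp ⟪T x, θ'⟫)) := by
  have hl := (lam_pos T θ).ne'
  refine ⟨?_, ?_⟩
  · rw [second_deriv_F]
    simp only [fderiv_logP T θ]
    rw [Finset.sum_congr rfl (fun x _ => show
      (T x i - (∑ x' : X, T x' i * Real.exp ⟪T x', θ⟫) / (∑ x' : X, Real.exp ⟪T x', θ⟫))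
        * (T x j - (∑ x' : X, T x' j * Real.exp ⟪T x', θ⟫) / (∑ x' : X, Real.exp ⟪T x', θ⟫))
        * (Real.exp ⟪T x, θ⟫ / ∑ x' : X, Real.exp ⟪T x', θ⟫)
      = T x i * T x j * Real.exp ⟪T x, θ⟫ / (∑ x' : X, Real.exp ⟪T x', θ⟫)
        - ((∑ x' : X, T x' i * Real.exp ⟪T x', θ⟫) / (∑ x' : X, Real.exp ⟪T x', θ⟫))
            * (T x j * Real.exp ⟪T x, θ⟫ / (∑ x' : X, Real.exp ⟪T x', θ⟫))
        - ((∑ x' : X, T x' j * Real.exp ⟪T x', θ⟫) / (∑ x' : X, Real.exp ⟪T x', θ⟫))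
            * (T x i * Real.exp ⟪T x, θ⟫ / (∑ x' : X, Real.exp ⟪T x', θ⟫))
        + ((∑ x' : X, T x' i * Real.exp ⟪T x', θ⟫) / (∑ x' : X, Real.exp ⟪T x', θ⟫))
            * ((∑ x' : X, T x' j * Real.exp ⟪T x', θ⟫) / (∑ x' : X, Real.exp ⟪T x', θ⟫))
            * (Real.exp ⟪T x, θ⟫ / (∑ x' : X, Real.exp ⟪T x', θ⟫)) from by ring)]
    simp only [Finset.sum_add_distrib, Finset.sum_sub_distrib, ← Finset.sum_div,
      ← Finset.mul_sum]
    field_simp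
    ring
  · rw [second_deriv_F]
    simp only [← mul_div_assoc, ← Finset.sum_div]
    field_simp
end

section
/- For a finite set X, a statistic T : X → ℝᵗ and θ, θ' ∈ ℝᵗ, the Bregman divergence of the log-partition function equals the Kullback–Leibler divergence of the corresponding exponential family distributions: F(θ) − F(θ') − ⟨θ − θ', ∇F(θ')⟩ = Σ_{x∈X} P_{θ'}(x) log( P_{θ'}(x) / P_θ(x) ). -/
open scoped RealInnerProductSpace BigOperators

/-- The Bregman divergence of the log-partition function of a finite linear
exponential family equals the Kullback–Leibler divergence of the corresponding
distributions: `F(θ) − F(θ') − ⟨θ − θ', ∇F(θ')⟩ = Σ_x P_{θ'}(x) log(P_{θ'}(x)/P_θ(x))`. -/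
theorem bregman_eq_kl {X : Type*} [Fintype X] [Nonempty X]
    {t : ℕ} (T : X → EuclideanSpace ℝ (Fin t)) (θ θ' g : EuclideanSpace ℝ (Fin t))
    (F : EuclideanSpace ℝ (Fin t) → ℝ)
    (hF : F = fun ϑ => Real.log (∑ x : X, Real.exp ⟪T x, ϑ⟫))
    (P : EuclideanSpace ℝ (Fin t) → X → ℝ)
    (hP : P = fun ϑ x => Real.exp ⟪T x, ϑ⟫ / ∑ x' : X, Real.exp ⟪T x', ϑ⟫)
    (hg : HasGradientAt F g θ') :
    F θ - F θ' - ⟪θ - θ', g⟫ = ∑ x : X, P θ' x * Real.log (P θ' x / P θ x) := by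
  have hSpos : ∀ ϑ : EuclideanSpace ℝ (Fin t), 0 < ∑ x : X, Real.exp ⟪T x, ϑ⟫ := fun ϑ =>
    Finset.sum_pos (fun x _ => Real.exp_pos _) Finset.univ_nonempty
  have hS : HasFDerivAt (fun ϑ : EuclideanSpace ℝ (Fin t) => ∑ x : X, Real.exp ⟪T x, ϑ⟫)
      (∑ x : X, Real.exp ⟪T x, θ'⟫ • (innerSL ℝ (T x))) θ' := by
    apply HasFDerivAt.fun_sum
    intro x _
    exact ((innerSL ℝ (T x)).hasFDerivAt (x := θ')).exp
  have hFd : HasFDerivAt F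
      ((∑ x : X, Real.exp ⟪T x, θ'⟫)⁻¹ • ∑ x : X, Real.exp ⟪T x, θ'⟫ • (innerSL ℝ (T x))) θ' := by
    rw [hF]
    exact hS.log (ne_of_gt (hSpos θ'))
  have hGrad : HasGradientAt F (∑ x : X, P θ' x • T x) θ' := by
    rw [hasGradientAt_iff_hasFDerivAt]
    refine hFd.congr_fderiv ?_
    symm
    ext y
    simp only [InnerProductSpace.toDual_apply_apply, sum_inner, real_inner_smul_left,
      ContinuousLinearMap.smul_apply, ContinuousLinearMap.sum_apply, innerSL_apply_apply,
      Finset.smul_sum, smul_eq_mul, hP]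
    exact Finset.sum_congr rfl fun x _ => by field_simp
  have hgeq : g = ∑ x : X, P θ' x • T x := hg.unique hGrad
  have hsum1 : ∑ x : X, P θ' x = 1 := by
    rw [hP]
    simp only
    rw [← Finset.sum_div, div_self (ne_of_gt (hSpos θ'))]
  have hlogP : ∀ (ϑ : EuclideanSpace ℝ (Fin t)) (x : X),
      Real.log (P ϑ x) = ⟪T x, ϑ⟫ - F ϑ := by
    intro ϑ x
    simp only [hP, hF]
    rw [Real.log_div (Real.exp_ne_zero _) (ne_of_gt (hSpos ϑ)), Real.log_exp]
  have hPpos : ∀ (ϑ : EuclideanSpace ℝ (Fin t)) (x : X), 0 < P ϑ x := by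
    intro ϑ x; rw [hP]; exact div_pos (Real.exp_pos _) (hSpos ϑ)
  have hrhs : ∀ x : X, P θ' x * Real.log (P θ' x / P θ x)
      = P θ' x * (⟪T x, θ'⟫ - F θ' - (⟪T x, θ⟫ - F θ)) := by
    intro x
    rw [Real.log_div (ne_of_gt (hPpos θ' x)) (ne_of_gt (hPpos θ x)), hlogP, hlogP]
  have hinner : ⟪θ - θ', g⟫ = ∑ x : X, P θ' x * ⟪T x, θ - θ'⟫ := by
    rw [hgeq, inner_sum]
    exact Finset.sum_congr rfl fun x _ => by
      rw [real_inner_smul_right, real_inner_comm]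
  rw [hinner]
  simp only [hrhs]
  have key : ∀ x : X, P θ' x * (⟪T x, θ'⟫ - F θ' - (⟪T x, θ⟫ - F θ))
      = P θ' x * (F θ - F θ') - P θ' x * ⟪T x, θ - θ'⟫ := by
    intro x
    rw [inner_sub_right]
    ring
  simp only [key]
  rw [Finset.sum_sub_distrib, ← Finset.sum_mul, hsum1]
  ring
end

section
/- Parametrization of the linear exponential XY family (finite case): let X be a finite set, s ≥ 1, T : X → ℝᵗ and S : Fin s → ℝ^{s−1} statistics such that the s vectors (S(i), 1) ∈ ℝˢ are linearly independent. Then for every ᾱ ∈ ℝ^{s−1} and every family θ̄ : Fin s → ℝᵗ there exist α ∈ ℝ^{s−1} and β : Fin s → ℝᵗ such that for all x ∈ X and y ∈ Fin s: exp(⟨S(y),α⟩ + ⟨T(x), β_y⟩) / λ(α,β) = [ exp(⟨S(y),ᾱ⟩) / Σ_{y'} exp(⟨S(y'),ᾱ⟩) ] · [ exp(⟨T(x), θ̄_y⟩) / Σ_{x'} exp(⟨T(x'), θ̄_y⟩) ], where λ(α,β) = Σ_{x∈X} Σ_{y∈Fin s} exp(⟨S(y),α⟩ + ⟨T(x), β_y⟩).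 -/
open scoped RealInnerProductSpace BigOperators

/-- Parametrization of the linear exponential XY family (finite case): if the
vectors `(S i, 1) ∈ ℝˢ` are linearly independent (here `s = m + 1 ≥ 1`), then
every product-form distribution `P(y)·P(x|y)` with categorical marginal
(statistic `S`, parameter `αbar`) and exponential-family conditionals
(statistic `T`, parameters `θbar y`) is realized by the joint parametrization
`P_{(α,β)}(x,y) = exp(⟨S y, α⟩ + ⟨T x, β y⟩)/λ(α,β)`. -/
theorem lexyf_parametrization {X : Type*} [Fintype X] [Nonempty X] {t m : ℕ}
    (T : X → EuclideanSpace ℝ (Fin t))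
    (S : Fin (m + 1) → EuclideanSpace ℝ (Fin m))
    (hS : LinearIndependent ℝ
      (fun i : Fin (m + 1) => (Fin.snoc (fun j => S i j) 1 : Fin (m + 1) → ℝ)))
    (αbar : EuclideanSpace ℝ (Fin m)) (θbar : Fin (m + 1) → EuclideanSpace ℝ (Fin t)) :
    ∃ (α : EuclideanSpace ℝ (Fin m)) (β : Fin (m + 1) → EuclideanSpace ℝ (Fin t)),
      ∀ (x : X) (y : Fin (m + 1)),
        Real.exp (⟪S y, α⟫ + ⟪T x, β y⟫)
            / (∑ x' : X, ∑ y' : Fin (m + 1), Real.exp (⟪S y', α⟫ + ⟪T x', β y'⟫))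
          = (Real.exp ⟪S y, αbar⟫ / ∑ y' : Fin (m + 1), Real.exp ⟪S y', αbar⟫)
            * (Real.exp ⟪T x, θbar y⟫ / ∑ x' : X, Real.exp ⟪T x', θbar y⟫) := by
  classical
  set Z : Fin (m + 1) → ℝ := fun y => ∑ x' : X, Real.exp ⟪T x', θbar y⟫ with hZ
  have hZpos : ∀ y, 0 < Z y := fun y =>
    Finset.sum_pos (fun x _ => Real.exp_pos _) Finset.univ_nonempty
  set M : Matrix (Fin (m + 1)) (Fin (m + 1)) ℝ :=
    fun i => (Fin.snoc (fun j => S i j) 1 : Fin (m + 1) → ℝ) with hM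
  have hMunit : IsUnit M := Matrix.linearIndependent_rows_iff_isUnit.mp hS
  have hsurj : Function.Surjective M.mulVec :=
    Matrix.mulVec_surjective_iff_isUnit.mpr hMunit
  obtain ⟨v, hv⟩ := hsurj (fun y => - Real.log (Z y))
  set d : ℝ := v (Fin.last m) with hd
  set w : EuclideanSpace ℝ (Fin m) :=
    (WithLp.equiv 2 (Fin m → ℝ)).symm (fun j => v (Fin.castSucc j)) with hw
  have hwj : ∀ j : Fin m, w j = v (Fin.castSucc j) := fun j => rfl
  refine ⟨αbar + w, θbar, fun x y => ?_⟩
  have key : ∀ y, ⟪S y, αbar + w⟫ = ⟪S y, αbar⟫ - Real.log (Z y) - d := by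
    intro y
    have hvy := congrFun hv y
    have hMv : M.mulVec v y = ∑ j : Fin m, S y j * v (Fin.castSucc j) + v (Fin.last m) := by
      simp [Matrix.mulVec, dotProduct, hM, Fin.sum_univ_castSucc, Fin.snoc]
    rw [hMv] at hvy
    simp only [PiLp.inner_apply, RCLike.inner_apply, conj_trivial, PiLp.add_apply, hwj,
      mul_add, add_mul, Finset.sum_add_distrib]
    have hcomm : ∑ j : Fin m, v (Fin.castSucc j) * S y j = ∑ j : Fin m, S y j * v (Fin.castSucc j) :=
      Finset.sum_congr rfl (fun j _ => mul_comm _ _)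
    linarith [hvy, hcomm]
  have hexp : ∀ y, Real.exp ⟪S y, αbar + w⟫
      = Real.exp ⟪S y, αbar⟫ / Z y / Real.exp d := by
    intro y
    rw [key y, Real.exp_sub, Real.exp_sub, Real.exp_log (hZpos y)]
  have hlam : (∑ x' : X, ∑ y' : Fin (m + 1),
      Real.exp (⟪S y', αbar + w⟫ + ⟪T x', θbar y'⟫))
      = (∑ y' : Fin (m + 1), Real.exp ⟪S y', αbar⟫) / Real.exp d := by
    rw [Finset.sum_comm, Finset.sum_div]
    refine Finset.sum_congr rfl fun y' _ => ?_
    simp_rw [Real.exp_add, hexp y']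
    rw [← Finset.mul_sum]
    have hzz : (∑ x' : X, Real.exp ⟪T x', θbar y'⟫) = Z y' := rfl
    rw [hzz]
    have hZy' := hZpos y'
    field_simp
  rw [hlam, Real.exp_add, hexp y]
  have hA : (0:ℝ) < ∑ y' : Fin (m + 1), Real.exp ⟪S y', αbar⟫ :=
    Finset.sum_pos (fun _ _ => Real.exp_pos _) Finset.univ_nonempty
  have hZy := hZpos y
  have hzz : (∑ x' : X, Real.exp ⟪T x', θbar y⟫) = Z y := rfl
  rw [hzz]
  field_simp
end

section
/- Diagonal form of the α*-block of the dual-coordinate gradient (overparametrized statistic): let X be a finite set, T : X → ℝᵗ, s ≥ 1, x ∈ X, and consider the function h_i(a, β*) = log a_i + ⟨T(x), θ_i⟩ − log Σ_{x'∈X} exp(⟨T(x'), θ_i⟩) with θ_i = β*_i / a_i, defined for a ∈ (ℝ_{>0})ˢ and β* : Fin s → ℝᵗ. Then ∂h_i/∂a_j = 0 for j ≠ i, and ∂h_i/∂a_i = d_i(x) := (1 − ⟨θ_i, T(x) − E_{θ_i}[T]⟩)/a_i, where E_{θ}[T] = Σ_{x'} T(x') exp(⟨T(x'),θ⟩)/Σ_{x'}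 exp(⟨T(x'),θ⟩). Note T(x) − E_{θ_i}[T] = ∇_{θ_i} log P_{θ_i}(x), so d_i(x) = (1 − ⟨θ_i, ∇_{θ_i} log P_{θ_i}(x)⟩)/P(Y=i). -/
open scoped RealInnerProductSpace BigOperators

/-- Diagonal form of the `α*`-block of the dual-coordinate gradient
(overparametrized statistic): for
`h i a β* = log (a i) + ⟨T x, θ i⟩ − log Σ_{x'} exp⟨T x', θ i⟩` with
`θ i = (a i)⁻¹ • β* i`, one has `∂(h i)/∂(a j) = 0` for `j ≠ i`, while
`∂(h i)/∂(a i) = d i = (1 − ⟨θ i, T x − E_{θ i}[T]⟩)/(a i)`; moreover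
`T x − E_{θ i}[T] = ∇_θ log P_θ(x)` at `θ = θ i`. -/
theorem dsngd_alpha_block_diagonal {X : Type*} [Fintype X] [Nonempty X]
    {t s : ℕ} (hs : 1 ≤ s) (T : X → EuclideanSpace ℝ (Fin t)) (x : X)
    (a : Fin s → ℝ) (ha : ∀ k, 0 < a k)
    (βs : Fin s → EuclideanSpace ℝ (Fin t))
    (h : Fin s → (Fin s → ℝ) → (Fin s → EuclideanSpace ℝ (Fin t)) → ℝ)
    (hh : h = fun i a' b => Real.log (a' i) + ⟪T x, (a' i)⁻¹ • b i⟫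
      - Real.log (∑ x' : X, Real.exp ⟪T x', (a' i)⁻¹ • b i⟫))
    (i : Fin s)
    (θi : EuclideanSpace ℝ (Fin t)) (hθi : θi = (a i)⁻¹ • βs i)
    (Eθ : EuclideanSpace ℝ (Fin t))
    (hEθ : Eθ = ∑ x' : X,
      (Real.exp ⟪T x', θi⟫ / ∑ x'' : X, Real.exp ⟪T x'', θi⟫) • T x') :
    (∀ j : Fin s, j ≠ i →
      HasDerivAt (fun r => h i (Function.update a j r) βs) 0 (a j)) ∧
    HasDerivAt (fun r => h i (Function.update a i r) βs)
      ((1 - ⟪θi, T x - Eθ⟫) / a i) (a i) ∧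
    HasGradientAt
      (fun θ => Real.log (Real.exp ⟪T x, θ⟫ / ∑ x' : X, Real.exp ⟪T x', θ⟫))
      (T x - Eθ) θi := by
  subst hh hθi hEθ
  set ai := a i with hai
  have hai0 : ai ≠ 0 := (ha i).ne'
  set b : X → ℝ := fun x' => ⟪T x', βs i⟫ with hb
  -- inner products with the scaled parameter
  have hin : ∀ (x' : X) (r : ℝ), ⟪T x', r⁻¹ • βs i⟫ = r⁻¹ * b x' := by
    intro x' r; rw [real_inner_smul_right]
  -- partition function positivity (for any inner values)
  have Zpos : ∀ r : ℝ, 0 < ∑ x' : X, Real.exp (r⁻¹ * b x') := by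
    intro r
    exact Finset.sum_pos (fun x' _ => Real.exp_pos _) Finset.univ_nonempty
  refine ⟨?_, ?_, ?_⟩
  · -- off-diagonal: the function is constant in r
    intro j hj
    have hupd : ∀ r : ℝ, Function.update a j r i = a i := fun r =>
      Function.update_of_ne hj.symm r a
    simp only [hupd]
    exact hasDerivAt_const _ _
  · -- diagonal entry
    have hfun : (fun r => Real.log (Function.update a i r i)
        + ⟪T x, (Function.update a i r i)⁻¹ • βs i⟫
        - Real.log (∑ x' : X, Real.exp ⟪T x', (Function.update a i r i)⁻¹ • βs i⟫))
        = fun r : ℝ => Real.log r + r⁻¹ * b x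
        - Real.log (∑ x' : X, Real.exp (r⁻¹ * b x')) := by
      funext r
      simp only [Function.update_self, hin]
    rw [hfun]
    -- build the derivative
    have h1 : HasDerivAt Real.log ai⁻¹ ai := Real.hasDerivAt_log hai0
    have hinv : HasDerivAt (fun r : ℝ => r⁻¹) (-(ai ^ 2)⁻¹) ai := hasDerivAt_inv hai0
    have h2 : HasDerivAt (fun r : ℝ => r⁻¹ * b x) (-(ai ^ 2)⁻¹ * b x) ai :=
      hinv.mul_const (b x)
    have hZ : HasDerivAt (fun r : ℝ => ∑ x' : X, Real.exp (r⁻¹ * b x'))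
        (∑ x' : X, Real.exp (ai⁻¹ * b x') * (-(ai ^ 2)⁻¹ * b x')) ai :=
      HasDerivAt.fun_sum fun x' _ => (hinv.mul_const (b x')).exp
    have h3 := hZ.log (Zpos ai).ne'
    have H := (h1.add h2).sub h3
    refine H.congr_deriv (Eq.symm ?_)
    -- now prove the real-number identity
    set Z : ℝ := ∑ x' : X, Real.exp (ai⁻¹ * b x') with hZdef
    have hZ0 : Z ≠ 0 := (Zpos ai).ne'
    have hS : (∑ x' : X, Real.exp (ai⁻¹ * b x') * (-(ai ^ 2)⁻¹ * b x'))
        = -(ai ^ 2)⁻¹ * ∑ x' : X, Real.exp (ai⁻¹ * b x') * b x' := by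
      rw [Finset.mul_sum]; exact Finset.sum_congr rfl fun x' _ => by ring
    have hθT : ⟪(ai⁻¹ • βs i : EuclideanSpace ℝ (Fin t)), T x⟫ = ai⁻¹ * b x := by
      rw [real_inner_smul_left, real_inner_comm]
    have hθE : ⟪(ai⁻¹ • βs i : EuclideanSpace ℝ (Fin t)),
        ∑ x' : X, (Real.exp ⟪T x', ai⁻¹ • βs i⟫
          / ∑ x'' : X, Real.exp ⟪T x'', ai⁻¹ • βs i⟫) • T x'⟫
        = ai⁻¹ * (∑ x' : X, Real.exp (ai⁻¹ * b x') * b x') / Z := by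
      rw [inner_sum, Finset.mul_sum, Finset.sum_div]
      refine Finset.sum_congr rfl fun x' _ => ?_
      rw [real_inner_smul_right, real_inner_smul_left, real_inner_comm (T x') (βs i)]
      simp only [hin, hb, hZdef]
      ring
    rw [inner_sub_right, hθT, hθE, hS]
    field_simp
    ring
  · -- the gradient statement
    have hfun : (fun θ : EuclideanSpace ℝ (Fin t) =>
        Real.log (Real.exp ⟪T x, θ⟫ / ∑ x' : X, Real.exp ⟪T x', θ⟫))
        = fun θ => ⟪T x, θ⟫ - Real.log (∑ x' : X, Real.exp ⟪T x', θ⟫) := by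
      funext θ
      have hZθ : (0 : ℝ) < ∑ x' : X, Real.exp ⟪T x', θ⟫ :=
        Finset.sum_pos (fun x' _ => Real.exp_pos _) Finset.univ_nonempty
      rw [Real.log_div (Real.exp_ne_zero _) hZθ.ne', Real.log_exp]
    rw [hfun, hasGradientAt_iff_hasFDerivAt]
    set θi : EuclideanSpace ℝ (Fin t) := ai⁻¹ • βs i with hθi'
    have hZθ : (0 : ℝ) < ∑ x' : X, Real.exp ⟪T x', θi⟫ :=
      Finset.sum_pos (fun x' _ => Real.exp_pos _) Finset.univ_nonempty
    have h1 : HasFDerivAt (fun θ : EuclideanSpace ℝ (Fin t) => ⟪T x, θ⟫)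
        (innerSL ℝ (T x)) θi := (innerSL ℝ (T x)).hasFDerivAt
    have hZ : HasFDerivAt (fun θ : EuclideanSpace ℝ (Fin t) =>
        ∑ x' : X, Real.exp ⟪T x', θ⟫)
        (∑ x' : X, Real.exp ⟪T x', θi⟫ • innerSL ℝ (T x')) θi :=
      HasFDerivAt.fun_sum fun x' _ => ((innerSL ℝ (T x')).hasFDerivAt).exp
    have h2 := hZ.log hZθ.ne'
    have H := h1.sub h2
    refine H.congr_fderiv (Eq.symm ?_)
    ext y
    simp only [InnerProductSpace.toDual_apply_apply, ContinuousLinearMap.sub_apply,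
      ContinuousLinearMap.smul_apply, ContinuousLinearMap.sum_apply,
      innerSL_apply_apply, inner_sub_left, sum_inner, real_inner_smul_left,
      smul_eq_mul, Finset.mul_sum]
    refine congrArg (fun z => ⟪T x, y⟫ - z) ?_
    refine Finset.sum_congr rfl fun x' _ => ?_
    ring
end

section
/- The β*-block of the dual-coordinate gradient: let X be a finite set, T : X → ℝᵗ, s ≥ 1, x ∈ X, and consider the function h_i(a, β*) = log a_i + ⟨T(x), θ_i⟩ − log Σ_{x'∈X} exp(⟨T(x'), θ_i⟩) with θ_i = β*_i / a_i, defined for a ∈ (ℝ_{>0})ˢ and β* : Fin s → ℝᵗ. Then for all i, k ∈ Fin s: the gradient of h_i with respect to β*_k equals 0 if k ≠ i, and equals (1/a_k)·(T(x) − E_{θ_k}[T]) if k = i, where E_{θ}[T] = Σ_{x'} T(x') exp(⟨T(x'),θ⟩)/Σ_{x'} exp(⟨T(x'),θ⟩); that is, ∇_{β*_k} h(x,η*) = (1/P(Y=k)) · ∇_{θ_k} log P_{θ_k}(x | Y=k) concentrated in the k-th component. -/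
open scoped RealInnerProductSpace BigOperators

/-- The `β*`-block of the dual-coordinate gradient: for
`h i a β* = log (a i) + ⟨T x, θ i⟩ − log Σ_{x'} exp⟨T x', θ i⟩` with
`θ i = (a i)⁻¹ • β* i`, the gradient of `h i` with respect to `β* k` is `0` for
`k ≠ i`, and equals `(a k)⁻¹ • (T x − E_{θ k}[T])` for `k = i`; i.e. the
`β*`-block is concentrated in the `k`-th component with value
`(1/P(Y=k)) • ∇_{θ k} log P_{θ k}(x | Y=k)`. -/
theorem dsngd_beta_block {X : Type*} [Fintype X] [Nonempty X]
    {t s : ℕ} (hs : 1 ≤ s) (T : X → EuclideanSpace ℝ (Fin t)) (x : X)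
    (a : Fin s → ℝ) (ha : ∀ k, 0 < a k)
    (βs : Fin s → EuclideanSpace ℝ (Fin t))
    (h : Fin s → (Fin s → ℝ) → (Fin s → EuclideanSpace ℝ (Fin t)) → ℝ)
    (hh : h = fun i a' b => Real.log (a' i) + ⟪T x, (a' i)⁻¹ • b i⟫
      - Real.log (∑ x' : X, Real.exp ⟪T x', (a' i)⁻¹ • b i⟫))
    (θ : Fin s → EuclideanSpace ℝ (Fin t)) (hθ : θ = fun k => (a k)⁻¹ • βs k)
    (Eθ : Fin s → EuclideanSpace ℝ (Fin t))
    (hEθ : Eθ = fun k => ∑ x' : X,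
      (Real.exp ⟪T x', θ k⟫ / ∑ x'' : X, Real.exp ⟪T x'', θ k⟫) • T x') :
    ∀ i k : Fin s,
      (k ≠ i →
        HasGradientAt (fun bk => h i a (Function.update βs k bk)) 0 (βs k)) ∧
      (k = i →
        HasGradientAt (fun bk => h i a (Function.update βs k bk))
          ((a k)⁻¹ • (T x - Eθ k)) (βs k)) := by
  intro i k
  constructor
  · intro hki
    have hconst : (fun bk => h i a (Function.update βs k bk))
        = fun _ => h i a βs := by
      funext bk
      simp [hh, Function.update_of_ne (Ne.symm hki)]
    rw [hconst]
    have := (hasFDerivAt_const (h i a βs) (βs k)).hasGradientAt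
    simpa using this
  · intro hki
    subst hki
    set c := (a k)⁻¹ with hc
    have hcpos : 0 < c := inv_pos.mpr (ha k)
    have hfun : (fun bk => h k a (Function.update βs k bk))
        = fun bk : EuclideanSpace ℝ (Fin t) =>
          Real.log (a k) + c * ⟪T x, bk⟫
          - Real.log (∑ x' : X, Real.exp (c * ⟪T x', bk⟫)) := by
      funext bk
      simp only [hh, Function.update_self, real_inner_smul_right, hc]
    rw [hfun]
    set b := βs k with hb
    have hS : ∀ bk : EuclideanSpace ℝ (Fin t),
        0 < ∑ x' : X, Real.exp (c * ⟪T x', bk⟫) :=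
      fun bk => Finset.sum_pos (fun x' _ => Real.exp_pos _) Finset.univ_nonempty
    have h1 : HasFDerivAt (fun bk : EuclideanSpace ℝ (Fin t) => c * ⟪T x, bk⟫)
        (c • innerSL ℝ (T x)) b :=
      ((innerSL ℝ (T x)).hasFDerivAt).const_mul c
    have h2 : HasFDerivAt
        (fun bk : EuclideanSpace ℝ (Fin t) => ∑ x' : X, Real.exp (c * ⟪T x', bk⟫))
        (∑ x' : X, Real.exp (c * ⟪T x', b⟫) • (c • innerSL ℝ (T x'))) b :=
      HasFDerivAt.fun_sum (fun x' _ =>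
        (((innerSL ℝ (T x')).hasFDerivAt).const_mul c).exp)
    have h3 := h2.log (ne_of_gt (hS b))
    have h4 := ((hasFDerivAt_const (Real.log (a k)) b).add h1).sub h3
    have h5 := h4.hasGradientAt
    convert h5 using 1
    · rfl
    apply (InnerProductSpace.toDual ℝ (EuclideanSpace ℝ (Fin t))).injective
    rw [LinearIsometryEquiv.apply_symm_apply]
    ext v
    simp only [InnerProductSpace.toDual_apply_apply, ContinuousLinearMap.add_apply,
      ContinuousLinearMap.zero_apply, ContinuousLinearMap.sub_apply,
      ContinuousLinearMap.smul_apply, ContinuousLinearMap.sum_apply,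
      innerSL_apply_apply, smul_eq_mul, hEθ, hθ]
    rw [real_inner_smul_left, inner_sub_left, sum_inner]
    have hSne : (∑ x' : X, Real.exp (c * ⟪T x', b⟫)) ≠ 0 := ne_of_gt (hS b)
    simp only [real_inner_smul_left, real_inner_smul_right, ← hc, zero_add]
    rw [mul_sub]
    congr 1
    rw [Finset.mul_sum, Finset.mul_sum]
    refine Finset.sum_congr rfl fun x' _ => ?_
    field_simp
    ring
end
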